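/- Let G be a finite group and p a prime. If the Sylow p-subgroups of G are TI-subgroups (that is, for every Sylow p-subgroup P and every g ∈ G, the intersection P ∩ P^g equals P or the trivial subgroup), then G does not have a redundant Sylow p-subgroup. -/
import Mathlib


/-- `G` has a redundant Sylow `p`-subgroup if there is a Sylow `p`-subgroup `P` such that
every `p`-element of `G` lies in some Sylow `p`-subgroup different from `P`. -/
def HasRedundantSylow (p : ℕ) (G : Type*) [Group G] : Prop :=
  ∃ P : Sylow p G, ∀ x : G, (∃ k : ℕ, orderOf x = p ^ k) →
    ∃ Q : Sylow p G, Q ≠ P ∧ x ∈ (Q : Subgroup G)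

/-- if the Sylow `p`-subgroups of `G` are TI-subgroups, then `G` does not have
a redundant Sylow `p`-subgroup. -/
theorem no_redundant_of_TI_sylow
    (p : ℕ) [Fact p.Prime] (G : Type*) [Group G] [Finite G]
    (hTI : ∀ (P : Sylow p G) (g : G),
      (P : Subgroup G) ⊓ ((P : Subgroup G).map (MulAut.conj g).toMonoidHom) = (P : Subgroup G) ∨
      (P : Subgroup G) ⊓ ((P : Subgroup G).map (MulAut.conj g).toMonoidHom) = ⊥) :
    ¬ HasRedundantSylow p G := by
  rintro ⟨P, hP⟩
  have key : ∀ x : G, (∃ k, orderOf x = p ^ k) → x ∈ (P : Subgroup G) → x = 1 := by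
    intro x hord hx
    obtain ⟨Q, hQne, hxQ⟩ := hP x hord
    obtain ⟨g, hg⟩ := MulAction.exists_smul_eq G P Q
    have hmap : (Q : Subgroup G) = (P : Subgroup G).map (MulAut.conj g).toMonoidHom := by
      rw [← hg]; rfl
    rcases hTI P g with h | h
    · exfalso
      apply hQne
      apply Sylow.ext
      have hle : (P : Subgroup G) ≤ (P : Subgroup G).map (MulAut.conj g).toMonoidHom :=
        inf_eq_left.mp h
      exact hmap.trans (P.3 (P.2.map _) hle)
    · have : x ∈ ((P : Subgroup G) ⊓ (P : Subgroup G).map (MulAut.conj g).toMonoidHom) :=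
        ⟨hx, hmap ▸ hxQ⟩
      rw [h] at this
      exact this
  have hPbot : (P : Subgroup G) = ⊥ := by
    rw [Subgroup.eq_bot_iff_forall]
    intro x hx
    obtain ⟨k, hk⟩ := IsPGroup.iff_orderOf.mp P.2 (⟨x, hx⟩ : (P : Subgroup G))
    exact key x ⟨k, by rwa [Subgroup.orderOf_mk] at hk⟩ hx
  obtain ⟨Q, hQne, _⟩ := hP 1 ⟨0, by simp⟩
  obtain ⟨g, hg⟩ := MulAction.exists_smul_eq G P Q
  apply hQne
  apply Sylow.ext
  rw [← hg]
  show (P : Subgroup G).map (MulAut.conj g).toMonoidHom = _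
  rw [hPbot]
  simp
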